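/- (AUC deletion update) Let Z be a finite multiset of data points (score, label) with label counts (n1, n2), and let Y ⊆ Z be a sub-multiset of points all having the same score σ with label counts (w1, w2). Let (u1, u2) be the label counts of points in Z with score strictly less than σ, and (v1, v2) the label counts of points in Z with score equal to σ. If U denotes the Mann-Whitney statistic of Z and U' that of Z \ Y, then U' = U − w2(u1 + v1/2) − w1(n2 − u2 − v2/2) + w1·w2/2. -/

import Mathlib

/-- The Mann-Whitney comparison function. -/
noncomputable def mwf (s t : ℝ) : ℝ := if s < t then 1 else if s = t then 1/2 else 0

/-- The Mann-Whitney U statistic of a multiset of (score, label) pairs,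
comparing the scores of label-1 points to the scores of label-2 points. -/
noncomputable def mwStat (Z : Multiset (ℝ × ℕ)) : ℝ :=
  (((Z.filter (fun z => z.2 = 1)).map Prod.fst).map
      (fun s => (((Z.filter (fun z => z.2 = 2)).map Prod.fst).map (fun t => mwf s t)).sum)).sum

open Multiset in
/-- Bilinear form underlying `mwStat`. -/
noncomputable def mwS (A B : Multiset ℝ) : ℝ :=
  (A.map (fun s => (B.map (fun t => mwf s t)).sum)).sum

open Multiset

lemma mwS_add_left (A₁ A₂ B : Multiset ℝ) : mwS (A₁ + A₂) B = mwS A₁ B + mwS A₂ B := by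
  simp [mwS]

lemma mwS_add_right (A B₁ B₂ : Multiset ℝ) : mwS A (B₁ + B₂) = mwS A B₁ + mwS A B₂ := by
  simp only [mwS, Multiset.map_add, Multiset.sum_add]
  exact Multiset.sum_map_add

lemma sum_mwf_to (σ : ℝ) (T : Multiset ℝ) :
    (T.map (fun t => mwf t σ)).sum
      = ((T.filter (fun t => t < σ)).card : ℝ)
        + ((T.filter (fun t => t = σ)).card : ℝ) / 2 := by
  classical
  induction T using Multiset.induction_on with
  | empty => simp
  | cons a T ih =>
      simp only [Multiset.map_cons, Multiset.sum_cons, ih, Multiset.filter_cons]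
      unfold mwf
      rcases lt_trichotomy a σ with h | h | h
      · simp [h, h.ne]
        push_cast; ring
      · simp [h, lt_irrefl]
        push_cast; ring
      · simp [not_lt.mpr h.le, h.ne']

lemma sum_mwf_from (σ : ℝ) (T : Multiset ℝ) :
    (T.map (fun t => mwf σ t)).sum
      = (T.card : ℝ) - ((T.filter (fun t => t < σ)).card : ℝ)
        - ((T.filter (fun t => t = σ)).card : ℝ) / 2 := by
  classical
  induction T using Multiset.induction_on with
  | empty => simp
  | cons a T ih =>
      simp only [Multiset.map_cons, Multiset.sum_cons, ih, Multiset.filter_cons,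
        Multiset.card_cons]
      unfold mwf
      rcases lt_trichotomy a σ with h | h | h
      · simp [h, h.ne, h.ne', not_lt.mpr h.le]
      · simp [h, lt_irrefl]
        push_cast; ring
      · simp [not_lt.mpr h.le, h.ne', h, h.ne]
        push_cast; ring

lemma sum_map_const_score {σ : ℝ} {m : Multiset ℝ} (hm : ∀ x ∈ m, x = σ) (f : ℝ → ℝ) :
    (m.map f).sum = (m.card : ℝ) * f σ := by
  have : m.map f = Multiset.replicate m.card (f σ) := by
    rw [← Multiset.map_const]
    exact Multiset.map_congr rfl (fun x hx => by simp [Function.const, hm x hx])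
  rw [this, Multiset.sum_replicate, nsmul_eq_mul]

lemma mwS_left_const {σ : ℝ} {A : Multiset ℝ} (hA : ∀ x ∈ A, x = σ) (B : Multiset ℝ) :
    mwS A B = (A.card : ℝ) * (B.map (fun t => mwf σ t)).sum := by
  unfold mwS
  exact sum_map_const_score hA _

lemma mwS_right_const {σ : ℝ} (A : Multiset ℝ) {B : Multiset ℝ} (hB : ∀ x ∈ B, x = σ) :
    mwS A B = (B.card : ℝ) * (A.map (fun s => mwf s σ)).sum := by
  unfold mwS
  rw [Multiset.map_congr rfl (fun s _ => sum_map_const_score hB (fun t => mwf s t))]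
  rw [Multiset.sum_map_mul_left]

theorem auc_deletion_update (Z Y : Multiset (ℝ × ℕ)) (σ : ℝ)
    (hlabZ : ∀ z ∈ Z, z.2 = 1 ∨ z.2 = 2)
    (hlabY : ∀ z ∈ Y, z.2 = 1 ∨ z.2 = 2)
    (hscoreY : ∀ z ∈ Y, z.1 = σ) (hsub : Y ≤ Z) :
    mwStat (Z - Y)
      = mwStat Z
        - ((Y.filter (fun z => z.2 = 2)).card : ℝ) *
            (((Z.filter (fun z => z.2 = 1 ∧ z.1 < σ)).card : ℝ)
              + ((Z.filter (fun z => z.2 = 1 ∧ z.1 = σ)).card : ℝ) / 2)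
        - ((Y.filter (fun z => z.2 = 1)).card : ℝ) *
            (((Z.filter (fun z => z.2 = 2)).card : ℝ)
              - ((Z.filter (fun z => z.2 = 2 ∧ z.1 < σ)).card : ℝ)
              - ((Z.filter (fun z => z.2 = 2 ∧ z.1 = σ)).card : ℝ) / 2)
        + ((Y.filter (fun z => z.2 = 1)).card : ℝ) *
            ((Y.filter (fun z => z.2 = 2)).card : ℝ) / 2 := by
  classical
  set W := Z - Y with hW
  have hZ : W + Y = Z := tsub_add_cancel_of_le hsub
  -- score multisets
  set AW : Multiset ℝ := (W.filter (fun z => z.2 = 1)).map Prod.fst with hAW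
  set BW : Multiset ℝ := (W.filter (fun z => z.2 = 2)).map Prod.fst with hBW
  set AY : Multiset ℝ := (Y.filter (fun z => z.2 = 1)).map Prod.fst with hAY
  set BY : Multiset ℝ := (Y.filter (fun z => z.2 = 2)).map Prod.fst with hBY
  set AZ : Multiset ℝ := (Z.filter (fun z => z.2 = 1)).map Prod.fst with hAZ
  set BZ : Multiset ℝ := (Z.filter (fun z => z.2 = 2)).map Prod.fst with hBZ
  have hAsplit : AZ = AW + AY := by
    rw [hAZ, hAW, hAY, ← hZ, Multiset.filter_add, Multiset.map_add]
  have hBsplit : BZ = BW + BY := by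
    rw [hBZ, hBW, hBY, ← hZ, Multiset.filter_add, Multiset.map_add]
  have hAYσ : ∀ x ∈ AY, x = σ := by
    intro x hx
    rw [hAY] at hx
    obtain ⟨z, hz, rfl⟩ := Multiset.mem_map.mp hx
    exact hscoreY z (Multiset.mem_of_mem_filter hz)
  have hBYσ : ∀ x ∈ BY, x = σ := by
    intro x hx
    rw [hBY] at hx
    obtain ⟨z, hz, rfl⟩ := Multiset.mem_map.mp hx
    exact hscoreY z (Multiset.mem_of_mem_filter hz)
  have hmwZ : mwStat Z = mwS AZ BZ := rfl
  have hmwW : mwStat W = mwS AW BW := rfl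
  -- split the statistic
  have hsplit : mwS AZ BZ
      = mwS AW BW + mwS AW BY + mwS AY BW + mwS AY BY := by
    rw [hAsplit, hBsplit, mwS_add_left, mwS_add_right, mwS_add_right]
    ring
  -- express cross terms via whole-Z quantities
  have hcross1 : mwS AZ BY = mwS AW BY + mwS AY BY := by
    rw [hAsplit, mwS_add_left]
  have hcross2 : mwS AY BZ = mwS AY BW + mwS AY BY := by
    rw [hBsplit, mwS_add_right]
  -- compute the three cross terms
  have hcardY1 : Multiset.card AY = (Y.filter (fun z => z.2 = 1)).card := by
    rw [hAY, Multiset.card_map]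
  have hcardY2 : Multiset.card BY = (Y.filter (fun z => z.2 = 2)).card := by
    rw [hBY, Multiset.card_map]
  -- card identities for Z filters
  have hcard_lt1 : (AZ.filter (fun t => t < σ)).card
      = (Z.filter (fun z => z.2 = 1 ∧ z.1 < σ)).card := by
    rw [hAZ, Multiset.filter_map, Multiset.card_map, Multiset.filter_filter]
    congr 1
    exact Multiset.filter_congr (fun z _ => by simp [Function.comp, and_comm])
  have hcard_eq1 : (AZ.filter (fun t => t = σ)).card
      = (Z.filter (fun z => z.2 = 1 ∧ z.1 = σ)).card := by
    rw [hAZ, Multiset.filter_map, Multiset.card_map, Multiset.filter_filter]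
    congr 1
    exact Multiset.filter_congr (fun z _ => by simp [Function.comp, and_comm])
  have hcard_lt2 : (BZ.filter (fun t => t < σ)).card
      = (Z.filter (fun z => z.2 = 2 ∧ z.1 < σ)).card := by
    rw [hBZ, Multiset.filter_map, Multiset.card_map, Multiset.filter_filter]
    congr 1
    exact Multiset.filter_congr (fun z _ => by simp [Function.comp, and_comm])
  have hcard_eq2 : (BZ.filter (fun t => t = σ)).card
      = (Z.filter (fun z => z.2 = 2 ∧ z.1 = σ)).card := by
    rw [hBZ, Multiset.filter_map, Multiset.card_map, Multiset.filter_filter]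
    congr 1
    exact Multiset.filter_congr (fun z _ => by simp [Function.comp, and_comm])
  have hcardBZ : Multiset.card BZ = (Z.filter (fun z => z.2 = 2)).card := by
    rw [hBZ, Multiset.card_map]
  have hS1 : mwS AZ BY
      = ((Y.filter (fun z => z.2 = 2)).card : ℝ) *
          (((Z.filter (fun z => z.2 = 1 ∧ z.1 < σ)).card : ℝ)
            + ((Z.filter (fun z => z.2 = 1 ∧ z.1 = σ)).card : ℝ) / 2) := by
    rw [mwS_right_const AZ hBYσ, sum_mwf_to, hcardY2, hcard_lt1, hcard_eq1]
  have hS2 : mwS AY BZ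
      = ((Y.filter (fun z => z.2 = 1)).card : ℝ) *
          (((Z.filter (fun z => z.2 = 2)).card : ℝ)
            - ((Z.filter (fun z => z.2 = 2 ∧ z.1 < σ)).card : ℝ)
            - ((Z.filter (fun z => z.2 = 2 ∧ z.1 = σ)).card : ℝ) / 2) := by
    rw [mwS_left_const hAYσ, sum_mwf_from, hcardY1, hcard_lt2, hcard_eq2, hcardBZ]
  have hS3 : mwS AY BY
      = ((Y.filter (fun z => z.2 = 1)).card : ℝ) *
          ((Y.filter (fun z => z.2 = 2)).card : ℝ) / 2 := by
    rw [mwS_left_const hAYσ, sum_map_const_score hBYσ, hcardY1, hcardY2]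
    have : mwf σ σ = 1/2 := by simp [mwf]
    rw [this]; ring
  rw [hmwW, hmwZ, hsplit]
  have e1 := hcross1
  have e2 := hcross2
  rw [hS1] at e1
  rw [hS2] at e2
  rw [hS3] at e1 e2
  linarith [e1, e2]
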